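/- arXiv:2212.08247 — 8 statements merged into one kernel-verified Lean document; each statement's English description precedes it below -/
import Mathlib

section
/- Let Â and A_i be r×r real matrices, B_i an r×m real matrix, Ĉ an m×r real matrix, and t_d a real number. Assume A_i = Â + B_i Ĉ, and assume the linear map sending an r×r real matrix X to A_i X − X Â is injective. If an r×r real matrix E_2 satisfies A_i E_2 − E_2 Â = B_i Ĉ exp(Â t_d) − exp(A_i t_d) B_i Ĉ, then E_2 = exp(Â t_d) − exp(A_i t_d). -/
open Matrix NormedSpace

/-- **Proposition 1.** If the Sylvester operator `X ↦ A_i X − X Â` is injective and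
`E₂` satisfies `A_i E₂ − E₂ Â = B_i Ĉ exp(Â t_d) − exp(A_i t_d) B_i Ĉ`, then
`E₂ = exp(Â t_d) − exp(A_i t_d)`. -/
theorem E2_unique_solution {r m : ℕ}
    (Ahat Ai : Matrix (Fin r) (Fin r) ℝ)
    (Bi : Matrix (Fin r) (Fin m) ℝ) (Chat : Matrix (Fin m) (Fin r) ℝ)
    (td : ℝ) (hAi : Ai = Ahat + Bi * Chat)
    (hinj : Function.Injective fun X : Matrix (Fin r) (Fin r) ℝ => Ai * X - X * Ahat)
    (E2 : Matrix (Fin r) (Fin r) ℝ)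
    (hE2 : Ai * E2 - E2 * Ahat =
      Bi * Chat * exp (td • Ahat) - exp (td • Ai) * (Bi * Chat)) :
    E2 = exp (td • Ahat) - exp (td • Ai) := by
  have h1 : exp (td • Ahat) * Ahat = Ahat * exp (td • Ahat) :=
    (((Commute.refl Ahat).smul_left td).exp_left).eq
  have h2 : exp (td • Ai) * Ai = Ai * exp (td • Ai) :=
    (((Commute.refl Ai).smul_left td).exp_left).eq
  have h3 : Ai * exp (td • Ahat)
      = Ahat * exp (td • Ahat) + Bi * Chat * exp (td • Ahat) := by
    rw [hAi, add_mul]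
  have h4 : exp (td • Ai) * Ahat
      = exp (td • Ai) * Ai - exp (td • Ai) * (Bi * Chat) := by
    rw [hAi, mul_add]; abel
  apply hinj
  simp only [hE2]
  rw [mul_sub, sub_mul, h3, h4, h1, ← h2]
  abel
end

section
/- Let Â, A_i, E_2, Q_23, Q_33 be r×r real matrices, B_i an r×m real matrix, Ĉ and C_i m×r real matrices, D_i an m×m real matrix, and t_d a real number. Assume: A_i = Â + B_i Ĉ; C_i = D_i Ĉ; E_2 = exp(Â t_d) − exp(A_i t_d); Âᵀ Q_23 + Q_23 A_i + L_23 = 0 where L_23 = −Ĉᵀ B_iᵀ Q_33 − Ĉᵀ D_iᵀ C_i + exp(Âᵀ t_d) Ĉᵀ D_iᵀ C_i exp(A_i t_d) − E_2ᵀ C_iᵀ C_i exp(A_i t_d); A_iᵀ Q_33 + Q_33 A_i + L_33 = 0 where L_33 = C_iᵀ C_i − exp(A_iᵀ t_d) C_iᵀ C_i exp(A_i t_d); and the linear map sending an r×r real matrix X to Âᵀ X + X A_i is injective. Then Q_23 = −Q_33. -/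
open Matrix NormedSpace

/-- **First part of Proposition 2.** Under the displayed Sylvester/Lyapunov equations for the
gramian blocks `Q₂₃`, `Q₃₃` and uniqueness of the Sylvester operator `X ↦ Âᵀ X + X A_i`,
we have `Q₂₃ = −Q₃₃`. -/
theorem Q23_eq_neg_Q33 {r m : ℕ}
    (Ahat Ai E2 Q23 Q33 : Matrix (Fin r) (Fin r) ℝ)
    (Bi : Matrix (Fin r) (Fin m) ℝ) (Chat Ci : Matrix (Fin m) (Fin r) ℝ)
    (Di : Matrix (Fin m) (Fin m) ℝ) (td : ℝ)
    (hAi : Ai = Ahat + Bi * Chat)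
    (hCi : Ci = Di * Chat)
    (hE2 : E2 = exp (td • Ahat) - exp (td • Ai))
    (hQ23 : Ahatᵀ * Q23 + Q23 * Ai +
      (-(Chatᵀ * Biᵀ * Q33) - Chatᵀ * Diᵀ * Ci
        + exp (td • Ahatᵀ) * Chatᵀ * Diᵀ * Ci * exp (td • Ai)
        - E2ᵀ * Ciᵀ * Ci * exp (td • Ai)) = 0)
    (hQ33 : Aiᵀ * Q33 + Q33 * Ai +
      (Ciᵀ * Ci - exp (td • Aiᵀ) * Ciᵀ * Ci * exp (td • Ai)) = 0)
    (hinj : Function.Injective fun X : Matrix (Fin r) (Fin r) ℝ => Ahatᵀ * X + X * Ai) :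
    Q23 = -Q33 := by
  apply hinj
  dsimp only
  subst hCi hAi hE2
  have hT : td • (Ahat + Bi * Chat)ᵀ = (td • (Ahat + Bi * Chat))ᵀ := (transpose_smul td _).symm
  have hTA : td • Ahatᵀ = (td • Ahat)ᵀ := (transpose_smul td Ahat).symm
  rw [hTA, Matrix.exp_transpose] at hQ23
  rw [hT, Matrix.exp_transpose] at hQ33
  simp only [transpose_sub, transpose_add, transpose_mul, transpose_neg, sub_mul, add_mul,
    mul_add, mul_sub, sub_eq_add_neg, neg_mul, mul_neg, neg_neg, Matrix.add_mul,
    Matrix.mul_add, Matrix.sub_mul, Matrix.mul_sub, Matrix.neg_mul, Matrix.mul_neg,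
    Matrix.mul_assoc] at hQ23 hQ33 ⊢
  linear_combination (norm := noncomm_ring) hQ23 + hQ33
end

section
/- Let Â, A_i, E_2, Q_22, Q_23, Q_33 be r×r real matrices, B_i an r×m real matrix, Ĉ and C_i m×r real matrices, D_i an m×m real matrix, and t_d a real number. Assume: A_i = Â + B_i Ĉ; C_i = D_i Ĉ; E_2 = exp(Â t_d) − exp(A_i t_d); Q_23 = −Q_33; Âᵀ Q_22 + Q_22 Â + L_22 = 0 where L_22 = −Ĉᵀ B_iᵀ Q_23 − Q_23 B_i Ĉ + Ĉᵀ D_iᵀ D_i Ĉ − exp(Âᵀ t_d) Ĉᵀ D_iᵀ D_i Ĉ exp(Â t_d) + E_2ᵀ C_iᵀ D_i Ĉ exp(Â t_d) + exp(Âᵀ t_d) Ĉᵀ D_iᵀ C_i E_2 − E_2ᵀ C_iᵀ C_i E_2; A_iᵀ Q_33 + Q_33 A_i + L_33 = 0 where L_33 = C_iᵀ C_i − exp(A_iᵀ t_d) C_iᵀ C_i exp(A_i t_d); and the linear map sending an r×r real matrix X to Âᵀ X + X Â is injective. Then Q_22 = Q_33. -/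
open Matrix NormedSpace

/-- **Second part of Proposition 2.** Under the displayed Lyapunov equations for the gramian
blocks `Q₂₂`, `Q₃₃`, the relation `Q₂₃ = −Q₃₃`, and uniqueness of the Lyapunov operator
`X ↦ Âᵀ X + X Â`, we have `Q₂₂ = Q₃₃`. -/
theorem Q22_eq_Q33 {r m : ℕ}
    (Ahat Ai E2 Q22 Q23 Q33 : Matrix (Fin r) (Fin r) ℝ)
    (Bi : Matrix (Fin r) (Fin m) ℝ) (Chat Ci : Matrix (Fin m) (Fin r) ℝ)
    (Di : Matrix (Fin m) (Fin m) ℝ) (td : ℝ)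
    (hAi : Ai = Ahat + Bi * Chat)
    (hCi : Ci = Di * Chat)
    (hE2 : E2 = exp (td • Ahat) - exp (td • Ai))
    (hQ23 : Q23 = -Q33)
    (hQ22 : Ahatᵀ * Q22 + Q22 * Ahat +
      (-(Chatᵀ * Biᵀ * Q23) - Q23 * Bi * Chat + Chatᵀ * Diᵀ * Di * Chat
        - exp (td • Ahatᵀ) * Chatᵀ * Diᵀ * Di * Chat * exp (td • Ahat)
        + E2ᵀ * Ciᵀ * Di * Chat * exp (td • Ahat)
        + exp (td • Ahatᵀ) * Chatᵀ * Diᵀ * Ci * E2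
        - E2ᵀ * Ciᵀ * Ci * E2) = 0)
    (hQ33 : Aiᵀ * Q33 + Q33 * Ai +
      (Ciᵀ * Ci - exp (td • Aiᵀ) * Ciᵀ * Ci * exp (td • Ai)) = 0)
    (hinj : Function.Injective fun X : Matrix (Fin r) (Fin r) ℝ => Ahatᵀ * X + X * Ahat) :
    Q22 = Q33 := by
  apply hinj
  show Ahatᵀ * Q22 + Q22 * Ahat = Ahatᵀ * Q33 + Q33 * Ahat
  have ht : ∀ M : Matrix (Fin r) (Fin r) ℝ, exp (td • Mᵀ) = (exp (td • M))ᵀ := by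
    intro M
    rw [← Matrix.transpose_smul, Matrix.exp_transpose]
  simp only [ht] at hQ22 hQ33
  have h22 := hQ22
  have h33 := hQ33
  rw [hE2, hQ23, hCi, hAi] at h22
  rw [hCi, hAi] at h33
  simp only [Matrix.transpose_add, Matrix.transpose_sub, Matrix.transpose_mul] at h22 h33
  have e22 : Ahatᵀ * Q22 + Q22 * Ahat =
      -(-(Chatᵀ * Biᵀ * -Q33) - -Q33 * Bi * Chat + Chatᵀ * Diᵀ * Di * Chat
        - (exp (td • Ahat))ᵀ * Chatᵀ * Diᵀ * Di * Chat * exp (td • Ahat)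
        + ((exp (td • Ahat))ᵀ - (exp (td • (Ahat + Bi * Chat)))ᵀ) * (Chatᵀ * Diᵀ) * Di * Chat * exp (td • Ahat)
        + (exp (td • Ahat))ᵀ * Chatᵀ * Diᵀ * (Di * Chat) * (exp (td • Ahat) - exp (td • (Ahat + Bi * Chat)))
        - ((exp (td • Ahat))ᵀ - (exp (td • (Ahat + Bi * Chat)))ᵀ) * (Chatᵀ * Diᵀ) * (Di * Chat) * (exp (td • Ahat) - exp (td • (Ahat + Bi * Chat)))) := by
    linear_combination (norm := noncomm_ring) h22
  have e33 : (Ahatᵀ + Chatᵀ * Biᵀ) * Q33 + Q33 * (Ahat + Bi * Chat) =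
      -((Chatᵀ * Diᵀ) * (Di * Chat) - (exp (td • (Ahat + Bi * Chat)))ᵀ * (Chatᵀ * Diᵀ) * (Di * Chat) * exp (td • (Ahat + Bi * Chat))) := by
    linear_combination (norm := noncomm_ring) h33
  rw [e22]
  have : Ahatᵀ * Q33 + Q33 * Ahat = (Ahatᵀ + Chatᵀ * Biᵀ) * Q33 + Q33 * (Ahat + Bi * Chat) - (Chatᵀ * Biᵀ * Q33 + Q33 * (Bi * Chat)) := by
    noncomm_ring
  rw [this, e33]
  generalize (exp (td • Ahat))ᵀ = Pt
  generalize (exp (td • (Ahat + Bi * Chat)))ᵀ = Pit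
  generalize exp (td • Ahat) = P
  generalize exp (td • (Ahat + Bi * Chat)) = Pi
  simp only [sub_mul, mul_sub, add_mul, mul_add, neg_mul, mul_neg, neg_neg, neg_sub,
    neg_add, Matrix.mul_assoc]
  abel
end

section
/- Let A be an n×n real matrix and C an m×n real matrix; let Â, A_i, E_2, Q_23, Q_33 be r×r real matrices, B_i an r×m real matrix, Ĉ and C_i m×r real matrices, D_i an m×m real matrix, E_1 an r×n real matrix, Q_12 and Q_13 n×r real matrices, and t_d a real number. Assume: A_i = Â + B_i Ĉ; C_i = D_i Ĉ; E_2 = exp(Â t_d) − exp(A_i t_d); Q_23 = −Q_33; Aᵀ Q_12 + Q_12 Â + L_12 = 0 where L_12 = Cᵀ B_iᵀ Q_23 − Q_13 B_i Ĉ − Cᵀ D_iᵀ D_i Ĉ + exp(Aᵀ t_d) Cᵀ D_iᵀ D_i Ĉ exp(Â t_d) + E_1ᵀ C_iᵀ D_i Ĉ exp(Â t_d) − exp(Aᵀ t_d) Cᵀ D_iᵀ C_i E_2 − E_1ᵀ C_iᵀ C_i E_2; Aᵀ Q_13 + Q_13 A_i + L_13 = 0 where L_13 = Cᵀ B_iᵀ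 Q_33 + Cᵀ D_iᵀ C_i − exp(Aᵀ t_d) Cᵀ D_iᵀ C_i exp(A_i t_d) − E_1ᵀ C_iᵀ C_i exp(A_i t_d); and the linear map sending an n×r real matrix X to Aᵀ X + X Â is injective. Then Q_12 = −Q_13. -/
open Matrix NormedSpace

/-- **Third part of Proposition 2.** Under the displayed Sylvester equations for the gramian
blocks `Q₁₂`, `Q₁₃`, the relation `Q₂₃ = −Q₃₃`, and uniqueness of the Sylvester operator
`X ↦ Aᵀ X + X Â`, we have `Q₁₂ = −Q₁₃`. -/
theorem Q12_eq_neg_Q13 {n r m : ℕ}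
    (A : Matrix (Fin n) (Fin n) ℝ) (C : Matrix (Fin m) (Fin n) ℝ)
    (Ahat Ai E2 Q23 Q33 : Matrix (Fin r) (Fin r) ℝ)
    (Bi : Matrix (Fin r) (Fin m) ℝ) (Chat Ci : Matrix (Fin m) (Fin r) ℝ)
    (Di : Matrix (Fin m) (Fin m) ℝ)
    (E1 : Matrix (Fin r) (Fin n) ℝ) (Q12 Q13 : Matrix (Fin n) (Fin r) ℝ)
    (td : ℝ)
    (hAi : Ai = Ahat + Bi * Chat)
    (hCi : Ci = Di * Chat)
    (hE2 : E2 = exp (td • Ahat) - exp (td • Ai))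
    (hQ23 : Q23 = -Q33)
    (hQ12 : Aᵀ * Q12 + Q12 * Ahat +
      (Cᵀ * Biᵀ * Q23 - Q13 * Bi * Chat - Cᵀ * Diᵀ * Di * Chat
        + exp (td • Aᵀ) * Cᵀ * Diᵀ * Di * Chat * exp (td • Ahat)
        + E1ᵀ * Ciᵀ * Di * Chat * exp (td • Ahat)
        - exp (td • Aᵀ) * Cᵀ * Diᵀ * Ci * E2
        - E1ᵀ * Ciᵀ * Ci * E2) = 0)
    (hQ13 : Aᵀ * Q13 + Q13 * Ai +
      (Cᵀ * Biᵀ * Q33 + Cᵀ * Diᵀ * Ci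
        - exp (td • Aᵀ) * Cᵀ * Diᵀ * Ci * exp (td • Ai)
        - E1ᵀ * Ciᵀ * Ci * exp (td • Ai)) = 0)
    (hinj : Function.Injective fun X : Matrix (Fin n) (Fin r) ℝ => Aᵀ * X + X * Ahat) :
    Q12 = -Q13 := by
  apply hinj
  show Aᵀ * Q12 + Q12 * Ahat = Aᵀ * (-Q13) + -Q13 * Ahat
  subst hAi hCi hE2 hQ23
  have key := congrArg₂ (· + ·) hQ12 hQ13
  simp only [add_zero] at key
  have h0 : Aᵀ * Q12 + Q12 * Ahat + (Aᵀ * Q13 + Q13 * Ahat) = 0 := by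
    rw [← key]
    simp only [Matrix.mul_add, Matrix.mul_sub, Matrix.mul_neg, Matrix.neg_mul,
      sub_eq_add_neg, Matrix.mul_assoc]
    abel
  have h1 : Aᵀ * (-Q13) + -Q13 * Ahat = -(Aᵀ * Q13 + Q13 * Ahat) := by
    rw [Matrix.mul_neg, Matrix.neg_mul, neg_add]
  rw [h1]
  exact eq_neg_of_add_eq_zero_left h0
end

section
/- Let A be an n×n real matrix, B an n×m real matrix, and t_1 ≤ t_2 real numbers. Then the matrix P = ∫_{t_1}^{t_2} exp(Aτ) B Bᵀ exp(Aᵀτ) dτ satisfies the Lyapunov equation A P + P Aᵀ + exp(A t_1) B Bᵀ exp(Aᵀ t_1) − exp(A t_2) B Bᵀ exp(Aᵀ t_2) = 0. -/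
open Matrix NormedSpace

attribute [local instance] Matrix.linftyOpNormedRing Matrix.linftyOpNormedAlgebra

/-- The time-limited controllability gramian
`P = ∫_{t₁}^{t₂} exp(Aτ) B Bᵀ exp(Aᵀτ) dτ` (entrywise integral) satisfies the Lyapunov equation
`A P + P Aᵀ + exp(A t₁) B Bᵀ exp(Aᵀ t₁) − exp(A t₂) B Bᵀ exp(Aᵀ t₂) = 0`. -/
theorem timeLimited_controllability_gramian_lyapunov {n m : ℕ}
    (A : Matrix (Fin n) (Fin n) ℝ) (B : Matrix (Fin n) (Fin m) ℝ)
    (t₁ t₂ : ℝ) (ht : t₁ ≤ t₂)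
    (P : Matrix (Fin n) (Fin n) ℝ)
    (hP : P = Matrix.of fun i j =>
      ∫ τ in t₁..t₂, (exp (τ • A) * B * Bᵀ * exp (τ • Aᵀ)) i j) :
    A * P + P * Aᵀ + exp (t₁ • A) * B * Bᵀ * exp (t₁ • Aᵀ)
      - exp (t₂ • A) * B * Bᵀ * exp (t₂ • Aᵀ) = 0 := by
  classical
  set F : ℝ → Matrix (Fin n) (Fin n) ℝ :=
    fun τ => exp (τ • A) * (B * Bᵀ) * exp (τ • Aᵀ) with hFdef
  have hFeq : ∀ τ : ℝ, exp (τ • A) * B * Bᵀ * exp (τ • Aᵀ) = F τ := by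
    intro τ; simp only [hFdef, Matrix.mul_assoc]
  -- derivative of F
  have hder : ∀ τ, HasDerivAt F (A * F τ + F τ * Aᵀ) τ := by
    intro τ
    have h1 : HasDerivAt (fun u : ℝ => exp (u • A)) (A * exp (τ • A)) τ :=
      hasDerivAt_exp_smul_const' A τ
    have h2 : HasDerivAt (fun u : ℝ => exp (u • Aᵀ)) (exp (τ • Aᵀ) * Aᵀ) τ :=
      hasDerivAt_exp_smul_const Aᵀ τ
    have h3 := (h1.mul_const (B * Bᵀ)).mul h2
    refine h3.congr_deriv ?_
    simp only [hFdef]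
    noncomm_ring
  -- entrywise derivative
  have hderij : ∀ (i j : Fin n) (τ : ℝ),
      HasDerivAt (fun τ => F τ i j) ((A * F τ + F τ * Aᵀ) i j) τ := by
    intro i j τ
    exact (LinearMap.toContinuousLinearMap
        ({ toFun := fun M => M i j, map_add' := fun _ _ => rfl,
           map_smul' := fun _ _ => rfl } :
          Matrix (Fin n) (Fin n) ℝ →ₗ[ℝ] ℝ)).hasFDerivAt.comp_hasDerivAt τ (hder τ)
  -- entrywise continuity and integrability
  have hcont : ∀ (i j : Fin n), Continuous (fun τ => F τ i j) := fun i j =>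
    continuous_iff_continuousAt.2 fun τ => (hderij i j τ).continuousAt
  have hcontd : ∀ (i j : Fin n), Continuous (fun τ => (A * F τ + F τ * Aᵀ) i j) := by
    intro i j
    simp only [Matrix.add_apply, Matrix.mul_apply]
    apply Continuous.add
    · exact continuous_finset_sum _ fun k _ => continuous_const.mul (hcont k j)
    · exact continuous_finset_sum _ fun k _ => (hcont i k).mul continuous_const
  -- FTC entrywise
  have hftc : ∀ (i j : Fin n),
      (∫ τ in t₁..t₂, (A * F τ + F τ * Aᵀ) i j) = F t₂ i j - F t₁ i j := fun i j =>
    intervalIntegral.integral_eq_sub_of_hasDerivAt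
      (fun τ _ => hderij i j τ) ((hcontd i j).intervalIntegrable _ _)
  have hPk : ∀ (k j : Fin n), P k j = ∫ τ in t₁..t₂, F τ k j := by
    intro k j
    rw [hP]
    simp only [Matrix.of_apply]
    exact intervalIntegral.integral_congr fun τ _ => by rw [hFeq]
  -- relate A*P + P*Aᵀ to the integral
  have hmain : ∀ (i j : Fin n),
      (A * P) i j + (P * Aᵀ) i j = ∫ τ in t₁..t₂, (A * F τ + F τ * Aᵀ) i j := by
    intro i j
    have h1 : (A * P) i j = ∫ τ in t₁..t₂, (A * F τ) i j := by
      rw [Matrix.mul_apply]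
      simp_rw [hPk, ← intervalIntegral.integral_const_mul]
      rw [← intervalIntegral.integral_finset_sum (f := fun k τ => A i k * F τ k j)
        (fun k _ => (continuous_const.mul (hcont k j)).intervalIntegrable _ _)]
      exact intervalIntegral.integral_congr fun τ _ => (Matrix.mul_apply ..).symm
    have h2 : (P * Aᵀ) i j = ∫ τ in t₁..t₂, (F τ * Aᵀ) i j := by
      rw [Matrix.mul_apply]
      simp_rw [hPk, ← intervalIntegral.integral_mul_const]
      rw [← intervalIntegral.integral_finset_sum (f := fun k τ => F τ i k * Aᵀ k j)
        (fun k _ => ((hcont i k).mul continuous_const).intervalIntegrable _ _)]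
      exact intervalIntegral.integral_congr fun τ _ => (Matrix.mul_apply ..).symm
    rw [h1, h2, ← intervalIntegral.integral_add]
    · exact intervalIntegral.integral_congr fun τ _ => rfl
    · apply Continuous.intervalIntegrable
      simp only [Matrix.mul_apply]
      exact continuous_finset_sum _ fun k _ => continuous_const.mul (hcont k j)
    · apply Continuous.intervalIntegrable
      simp only [Matrix.mul_apply]
      exact continuous_finset_sum _ fun k _ => (hcont i k).mul continuous_const
  rw [hFeq t₁, hFeq t₂]
  ext i j
  have h := (hmain i j).trans (hftc i j)
  simp only [Matrix.add_apply, Matrix.sub_apply, Matrix.zero_apply]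
  linarith
end

section
/- Let A be an n×n real matrix, F an r×r real matrix, G and X n×r real matrices, and t_d a real number. If A X + X F + G = 0, then the matrix P := X − exp(A t_d) X exp(F t_d) satisfies A P + P F + G − exp(A t_d) G exp(F t_d) = 0. -/
open Matrix NormedSpace

/-- If `X` solves the infinite-horizon Sylvester equation `A X + X F + G = 0`, then
`P = X − exp(A t_d) X exp(F t_d)` solves the time-limited Sylvester equation
`A P + P F + G − exp(A t_d) G exp(F t_d) = 0`. -/
theorem timeLimited_sylvester_from_infinite {n r : ℕ}
    (A : Matrix (Fin n) (Fin n) ℝ) (F : Matrix (Fin r) (Fin r) ℝ)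
    (G X : Matrix (Fin n) (Fin r) ℝ) (td : ℝ)
    (hX : A * X + X * F + G = 0) :
    A * (X - exp (td • A) * X * exp (td • F))
      + (X - exp (td • A) * X * exp (td • F)) * F
      + G - exp (td • A) * G * exp (td • F) = 0 := by
  set EA := exp (td • A) with hEA
  set EF := exp (td • F) with hEF
  have hA : A * EA = EA * A := (((Commute.refl A).smul_right td).exp_right).eq
  have hF : EF * F = F * EF := ((((Commute.refl F).smul_right td).exp_right).symm).eq
  have h1 : A * (EA * X * EF) = EA * (A * X) * EF := by
    rw [← Matrix.mul_assoc, ← Matrix.mul_assoc, hA, Matrix.mul_assoc EA A]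
  have h2 : (EA * X * EF) * F = EA * (X * F) * EF := by
    rw [Matrix.mul_assoc, hF, ← Matrix.mul_assoc, Matrix.mul_assoc EA X,
      Matrix.mul_assoc EA (X * F)]
  have expand : EA * (A * X + X * F + G) * EF
      = EA * (A * X) * EF + EA * (X * F) * EF + EA * G * EF := by
    rw [Matrix.mul_add, Matrix.mul_add, Matrix.add_mul, Matrix.add_mul]
  rw [hX] at expand
  simp only [Matrix.mul_zero, Matrix.zero_mul] at expand
  have h3 : EA * (A * X) * EF + EA * (X * F) * EF + EA * G * EF = 0 := expand.symm
  calc A * (X - EA * X * EF) + (X - EA * X * EF) * F + G - EA * G * EF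
      = (A * X + X * F + G)
        - (EA * (A * X) * EF + EA * (X * F) * EF + EA * G * EF) := by
        rw [Matrix.mul_sub, Matrix.sub_mul, h1, h2]; abel
    _ = 0 := by rw [hX, h3, sub_zero]
end

section
/- Let A be an n×n complex matrix, B an n×m complex matrix, C an m×n complex matrix; let Â be an r×r complex matrix, B̂ an r×m complex matrix, Ĉ an m×r complex matrix, and D an invertible m×m complex matrix. Set A_i = Â − B̂ D⁻¹ Ĉ, B_i = −B̂ D⁻¹, C_i = D⁻¹ Ĉ, D_i = D⁻¹. Let A_rel be the (n+r+r)×(n+r+r) block matrix with block rows [[A, 0, 0], [0, Â, 0], [B_i C, −B_i Ĉ, A_i]], let B_rel be the block column [B; B̂; 0], and let C_rel be the block row [D_i C, −D_i Ĉ, C_i]. Let s be a complex number such that sI − A, sI − Â, sI − A_i, and sI − A_rel are all invertible. Then C_rel (sI − A_rel)⁻¹ B_rel = (D⁻¹ − D⁻¹ Ĉ (sI − A_i)⁻¹ B̂ D⁻¹) · (C (sI − A)⁻¹ B − Ĉ (sI − Â)⁻¹ B̂). -/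
open Matrix

lemma fromColumns_add' {m n₁ n₂ : Type*} (A₁ C₁ : Matrix m n₁ ℂ) (A₂ C₂ : Matrix m n₂ ℂ) :
    fromCols A₁ A₂ + fromCols C₁ C₂ = fromCols (A₁ + C₁) (A₂ + C₂) := by
  ext _ (_ | _) <;> simp [fromCols]

lemma fromColumns_sub' {m n₁ n₂ : Type*} (A₁ C₁ : Matrix m n₁ ℂ) (A₂ C₂ : Matrix m n₂ ℂ) :
    fromCols A₁ A₂ - fromCols C₁ C₂ = fromCols (A₁ - C₁) (A₂ - C₂) := by
  ext _ (_ | _) <;> simp [fromCols]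

lemma fromBlocks_sub' {l m n o : Type*} (A A' : Matrix n l ℂ) (B B' : Matrix n m ℂ)
    (C C' : Matrix o l ℂ) (D D' : Matrix o m ℂ) :
    fromBlocks A B C D - fromBlocks A' B' C' D' =
      fromBlocks (A - A') (B - B') (C - C') (D - D') := by
  ext (_ | _) (_ | _) <;> simp [fromBlocks]

/-- `(A_rel, B_rel, C_rel)` is a state-space realization of the relative error system
`Δ_rel(s) = Ĥ(s)⁻¹ Δ_add(s)`: for every `s` making all displayed resolvents invertible,
`C_rel (sI − A_rel)⁻¹ B_rel = (D⁻¹ − D⁻¹ Ĉ (sI − A_i)⁻¹ B̂ D⁻¹) ·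
(C (sI − A)⁻¹ B − Ĉ (sI − Â)⁻¹ B̂)`. -/
theorem relative_error_realization {n r m : ℕ}
    (A : Matrix (Fin n) (Fin n) ℂ) (B : Matrix (Fin n) (Fin m) ℂ)
    (C : Matrix (Fin m) (Fin n) ℂ)
    (Ahat : Matrix (Fin r) (Fin r) ℂ) (Bhat : Matrix (Fin r) (Fin m) ℂ)
    (Chat : Matrix (Fin m) (Fin r) ℂ) (D : Matrix (Fin m) (Fin m) ℂ)
    (hD : IsUnit D)
    (Ai : Matrix (Fin r) (Fin r) ℂ) (Bi : Matrix (Fin r) (Fin m) ℂ)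
    (Ci : Matrix (Fin m) (Fin r) ℂ) (Di : Matrix (Fin m) (Fin m) ℂ)
    (hAi : Ai = Ahat - Bhat * D⁻¹ * Chat) (hBi : Bi = -(Bhat * D⁻¹))
    (hCi : Ci = D⁻¹ * Chat) (hDi : Di = D⁻¹)
    (Arel : Matrix ((Fin n ⊕ Fin r) ⊕ Fin r) ((Fin n ⊕ Fin r) ⊕ Fin r) ℂ)
    (Brel : Matrix ((Fin n ⊕ Fin r) ⊕ Fin r) (Fin m) ℂ)
    (Crel : Matrix (Fin m) ((Fin n ⊕ Fin r) ⊕ Fin r) ℂ)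
    (hArel : Arel = Matrix.fromBlocks (Matrix.fromBlocks A 0 0 Ahat) 0
      (Matrix.fromCols (Bi * C) (-(Bi * Chat))) Ai)
    (hBrel : Brel = Matrix.fromRows (Matrix.fromRows B Bhat) 0)
    (hCrel : Crel = Matrix.fromCols (Matrix.fromCols (Di * C) (-(Di * Chat))) Ci)
    (s : ℂ)
    (hsA : IsUnit (s • (1 : Matrix (Fin n) (Fin n) ℂ) - A))
    (hsAhat : IsUnit (s • (1 : Matrix (Fin r) (Fin r) ℂ) - Ahat))
    (hsAi : IsUnit (s • (1 : Matrix (Fin r) (Fin r) ℂ) - Ai))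
    (hsArel : IsUnit (s • (1 : Matrix ((Fin n ⊕ Fin r) ⊕ Fin r) ((Fin n ⊕ Fin r) ⊕ Fin r) ℂ)
      - Arel)) :
    Crel * (s • (1 : Matrix ((Fin n ⊕ Fin r) ⊕ Fin r) ((Fin n ⊕ Fin r) ⊕ Fin r) ℂ) - Arel)⁻¹
        * Brel =
      (D⁻¹ - D⁻¹ * Chat * (s • (1 : Matrix (Fin r) (Fin r) ℂ) - Ai)⁻¹ * Bhat * D⁻¹) *
        (C * (s • (1 : Matrix (Fin n) (Fin n) ℂ) - A)⁻¹ * B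
          - Chat * (s • (1 : Matrix (Fin r) (Fin r) ℂ) - Ahat)⁻¹ * Bhat) := by
  set Ea := s • (1 : Matrix (Fin n) (Fin n) ℂ) - A with hEa
  set Eh := s • (1 : Matrix (Fin r) (Fin r) ℂ) - Ahat with hEh
  set Ei := s • (1 : Matrix (Fin r) (Fin r) ℂ) - Ai with hEi
  have hEaEa : Ea * Ea⁻¹ = 1 := mul_nonsing_inv _ ((isUnit_iff_isUnit_det _).mp hsA)
  have hEhEh : Eh * Eh⁻¹ = 1 := mul_nonsing_inv _ ((isUnit_iff_isUnit_det _).mp hsAhat)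
  have hEiEi : Ei * Ei⁻¹ = 1 := mul_nonsing_inv _ ((isUnit_iff_isUnit_det _).mp hsAi)
  -- the resolvent of the relative-error system, in block form
  have hErel : s • (1 : Matrix ((Fin n ⊕ Fin r) ⊕ Fin r) ((Fin n ⊕ Fin r) ⊕ Fin r) ℂ) - Arel =
      fromBlocks (fromBlocks Ea 0 0 Eh) 0
        (fromCols (-(Bi * C)) (Bi * Chat)) Ei := by
    rw [hArel, ← fromBlocks_one (l := Fin n ⊕ Fin r), ← fromBlocks_one (l := Fin n),
      fromBlocks_smul, fromBlocks_smul, fromBlocks_sub', fromBlocks_sub']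
    congr 1 <;> simp [fromCols_neg, hEa, hEh]
  -- its explicit inverse
  have hinv : (s • (1 : Matrix ((Fin n ⊕ Fin r) ⊕ Fin r) ((Fin n ⊕ Fin r) ⊕ Fin r) ℂ) - Arel)⁻¹ =
      fromBlocks (fromBlocks Ea⁻¹ 0 0 Eh⁻¹) 0
        (fromCols (Ei⁻¹ * (Bi * C * Ea⁻¹)) (Ei⁻¹ * (-(Bi * Chat * Eh⁻¹)))) Ei⁻¹ := by
    apply inv_eq_right_inv
    rw [hErel, fromBlocks_multiply, fromBlocks_multiply]
    have h21 : fromCols (-(Bi * C)) (Bi * Chat) * fromBlocks Ea⁻¹ 0 0 Eh⁻¹ +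
        Ei * fromCols (Ei⁻¹ * (Bi * C * Ea⁻¹)) (Ei⁻¹ * (-(Bi * Chat * Eh⁻¹))) = 0 := by
      rw [fromCols_mul_fromBlocks, Matrix.mul_fromCols, fromColumns_add',
        ← fromCols_zero (m := (Fin r)) (n₁ := Fin n) (n₂ := Fin r)]
      congr 1 <;> simp [← Matrix.mul_assoc, hEiEi]
    rw [h21, hEaEa, hEhEh, hEiEi]
    simp [fromBlocks_one]
  rw [hinv, hCrel, hBrel]
  simp only [fromCols_mul_fromBlocks, Matrix.mul_fromCols, fromColumns_add',
    fromCols_mul_fromRows, Matrix.mul_zero, Matrix.zero_mul, add_zero, zero_add]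
  rw [hBi, hCi, hDi]
  simp only [Matrix.mul_neg, Matrix.neg_mul, neg_neg, Matrix.add_mul, Matrix.sub_mul,
    Matrix.mul_sub, Matrix.mul_assoc]
  abel
end

section
/- Let A be an n×n real matrix, B an n×m real matrix, and t_d a real number. Assume the linear map sending an n×n real matrix X to A X + X Aᵀ is injective. If an n×n real matrix P satisfies A P + P Aᵀ + B Bᵀ − exp(A t_d) B Bᵀ exp(Aᵀ t_d) = 0, then P = ∫_0^{t_d} exp(Aτ) B Bᵀ exp(Aᵀτ) dτ. -/
open Matrix NormedSpace

attribute [local instance] Matrix.linftyOpNormedRing Matrix.linftyOpNormedAlgebra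

/-- If the Lyapunov operator `X ↦ A X + X Aᵀ` is injective, then the unique solution of the
time-limited Lyapunov equation `A P + P Aᵀ + B Bᵀ − exp(A t_d) B Bᵀ exp(Aᵀ t_d) = 0` is the
time-limited controllability gramian `P = ∫_0^{t_d} exp(Aτ) B Bᵀ exp(Aᵀτ) dτ`. -/
theorem timeLimited_gramian_unique {n m : ℕ}
    (A : Matrix (Fin n) (Fin n) ℝ) (B : Matrix (Fin n) (Fin m) ℝ) (td : ℝ)
    (hinj : Function.Injective fun X : Matrix (Fin n) (Fin n) ℝ => A * X + X * Aᵀ)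
    (P : Matrix (Fin n) (Fin n) ℝ)
    (hP : A * P + P * Aᵀ + B * Bᵀ - NormedSpace.exp (td • A) * B * Bᵀ * NormedSpace.exp (td • Aᵀ) = 0) :
    P = Matrix.of fun i j =>
      ∫ τ in (0:ℝ)..td, (NormedSpace.exp (τ • A) * B * Bᵀ * NormedSpace.exp (τ • Aᵀ)) i j := by
  classical
  set C : Matrix (Fin n) (Fin n) ℝ := B * Bᵀ with hCdef
  set F : ℝ → Matrix (Fin n) (Fin n) ℝ :=
    fun τ => NormedSpace.exp (τ • A) * C * NormedSpace.exp (τ • Aᵀ) with hFdef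
  -- derivative of F
  have hderiv : ∀ τ : ℝ, HasDerivAt F (A * F τ + F τ * Aᵀ) τ := by
    intro τ
    have h1 : HasDerivAt (fun u : ℝ => NormedSpace.exp (u • A)) (A * NormedSpace.exp (τ • A)) τ :=
      hasDerivAt_exp_smul_const' A τ
    have h2 : HasDerivAt (fun u : ℝ => NormedSpace.exp (u • Aᵀ)) (NormedSpace.exp (τ • Aᵀ) * Aᵀ) τ :=
      hasDerivAt_exp_smul_const Aᵀ τ
    have h := (h1.mul_const C).mul h2
    refine h.congr_deriv ?_
    simp only [hFdef, mul_assoc, mul_add]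
  -- entrywise derivatives via the (continuous linear) entry evaluation map
  have hEntry : ∀ (i j : Fin n) (τ : ℝ),
      HasDerivAt (fun u => F u i j) ((A * F τ + F τ * Aᵀ) i j) τ := by
    intro i j τ
    let e : Matrix (Fin n) (Fin n) ℝ →ₗ[ℝ] ℝ :=
      { toFun := fun M => M i j
        map_add' := fun _ _ => rfl
        map_smul' := fun _ _ => rfl }
    have := (e.toContinuousLinearMap.hasFDerivAt
      (x := F τ)).comp_hasDerivAt τ (hderiv τ)
    exact this
  have hce : ∀ (i j : Fin n), Continuous fun τ : ℝ => F τ i j := fun i j =>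
    continuous_iff_continuousAt.2 fun τ => (hEntry i j τ).continuousAt
  have hentInt : ∀ i j : Fin n,
      IntervalIntegrable (fun τ => F τ i j) MeasureTheory.volume 0 td :=
    fun i j => (hce i j).intervalIntegrable _ _
  set G : Matrix (Fin n) (Fin n) ℝ :=
    Matrix.of fun i j => ∫ τ in (0:ℝ)..td, F τ i j with hGdef
  -- the goal's matrix equals G
  have hGoal : (Matrix.of fun i j =>
      ∫ τ in (0:ℝ)..td, (NormedSpace.exp (τ • A) * B * Bᵀ * NormedSpace.exp (τ • Aᵀ)) i j) = G := by
    ext i j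
    simp only [hGdef, Matrix.of_apply]
    refine intervalIntegral.integral_congr fun τ _ => ?_
    simp only [hFdef, hCdef, Matrix.mul_assoc]
  -- key: A G + G Aᵀ = F td - F 0
  have key : A * G + G * Aᵀ = F td - F 0 := by
    ext i j
    have h1 : (A * G) i j = ∫ τ in (0:ℝ)..td, (A * F τ) i j := by
      simp only [Matrix.mul_apply, hGdef, Matrix.of_apply]
      calc ∑ k, A i k * ∫ τ in (0:ℝ)..td, F τ k j
          = ∑ k, ∫ τ in (0:ℝ)..td, A i k * F τ k j := by
            refine Finset.sum_congr rfl fun k _ => ?_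
            rw [intervalIntegral.integral_const_mul]
        _ = ∫ τ in (0:ℝ)..td, ∑ k, A i k * F τ k j :=
            (intervalIntegral.integral_finset_sum
              (fun k _ => (hentInt k j).const_mul (A i k))).symm
    have h2 : (G * Aᵀ) i j = ∫ τ in (0:ℝ)..td, (F τ * Aᵀ) i j := by
      simp only [Matrix.mul_apply, hGdef, Matrix.of_apply]
      calc ∑ k, (∫ τ in (0:ℝ)..td, F τ i k) * Aᵀ k j
          = ∑ k, ∫ τ in (0:ℝ)..td, F τ i k * Aᵀ k j := by
            refine Finset.sum_congr rfl fun k _ => ?_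
            rw [intervalIntegral.integral_mul_const]
        _ = ∫ τ in (0:ℝ)..td, ∑ k, F τ i k * Aᵀ k j :=
            (intervalIntegral.integral_finset_sum
              (fun k _ => (hentInt i k).mul_const (Aᵀ k j))).symm
    have hAint : IntervalIntegrable (fun τ => (A * F τ) i j) MeasureTheory.volume 0 td := by
      have : Continuous fun τ => (A * F τ) i j := by
        simp only [Matrix.mul_apply]
        exact continuous_finset_sum _ fun k _ => continuous_const.mul (hce k j)
      exact this.intervalIntegrable _ _
    have hBint : IntervalIntegrable (fun τ => (F τ * Aᵀ) i j) MeasureTheory.volume 0 td := by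
      have : Continuous fun τ => (F τ * Aᵀ) i j := by
        simp only [Matrix.mul_apply]
        exact continuous_finset_sum _ fun k _ => (hce i k).mul continuous_const
      exact this.intervalIntegrable _ _
    have hftc : (∫ τ in (0:ℝ)..td, (A * F τ + F τ * Aᵀ) i j) = F td i j - F 0 i j :=
      intervalIntegral.integral_eq_sub_of_hasDerivAt (fun τ _ => hEntry i j τ)
        (((hAint.add hBint).congr ?_))
    · calc (A * G + G * Aᵀ) i j = (A * G) i j + (G * Aᵀ) i j := rfl
        _ = (∫ τ in (0:ℝ)..td, (A * F τ) i j) + ∫ τ in (0:ℝ)..td, (F τ * Aᵀ) i j := by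
            rw [h1, h2]
        _ = ∫ τ in (0:ℝ)..td, ((A * F τ) i j + (F τ * Aᵀ) i j) :=
            (intervalIntegral.integral_add hAint hBint).symm
        _ = ∫ τ in (0:ℝ)..td, (A * F τ + F τ * Aᵀ) i j := rfl
        _ = F td i j - F 0 i j := hftc
        _ = (F td - F 0) i j := rfl
    · exact fun _ _ => rfl
  have hF0 : F 0 = C := by
    simp [hFdef]
  have hFtd : F td = NormedSpace.exp (td • A) * B * Bᵀ * NormedSpace.exp (td • Aᵀ) := by
    simp only [hFdef, hCdef, Matrix.mul_assoc]
  have hPG : (fun X : Matrix (Fin n) (Fin n) ℝ => A * X + X * Aᵀ) P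
      = (fun X : Matrix (Fin n) (Fin n) ℝ => A * X + X * Aᵀ) G := by
    show A * P + P * Aᵀ = A * G + G * Aᵀ
    rw [key, hF0, hFtd]
    exact eq_sub_of_add_eq (sub_eq_zero.mp hP)
  rw [hGoal]
  exact hinj hPG
end
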